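/- For fixed a, b ∈ ℝ, the bivariate standard normal cdf ρ ↦ Φ₂(a,b;ρ) is continuous and strictly increasing on (−1,1). -/

import Mathlib

open MeasureTheory Real Set

open Filter

/-- Bivariate standard normal density with correlation ρ. -/
noncomputable def phi2 (a b ρ : ℝ) : ℝ :=
  (2 * Real.pi * Real.sqrt (1 - ρ ^ 2))⁻¹ *
    Real.exp (-(a ^ 2 - 2 * ρ * a * b + b ^ 2) / (2 * (1 - ρ ^ 2)))

noncomputable def gauss (t : ℝ) : ℝ := (Real.sqrt (2 * Real.pi))⁻¹ * Real.exp (-t ^ 2 / 2)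

noncomputable def PhiCdf (t : ℝ) : ℝ := ∫ x in Set.Iic t, gauss x

lemma gauss_pos (t : ℝ) : 0 < gauss t := by
  apply mul_pos (inv_pos.2 (Real.sqrt_pos.2 (by positivity))) (Real.exp_pos _)

lemma gauss_cont : Continuous gauss := by
  unfold gauss; fun_prop

lemma gauss_le (t : ℝ) : gauss t ≤ (Real.sqrt (2 * Real.pi))⁻¹ := by
  have h1 : Real.exp (-t ^ 2 / 2) ≤ 1 := Real.exp_le_one_iff.2 (by nlinarith [sq_nonneg t])
  have h2 : (0:ℝ) ≤ (Real.sqrt (2 * Real.pi))⁻¹ := by positivity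
  calc gauss t ≤ (Real.sqrt (2 * Real.pi))⁻¹ * 1 := mul_le_mul_of_nonneg_left h1 h2
    _ = _ := mul_one _

lemma gauss_integrable : Integrable gauss := by
  unfold gauss
  refine Integrable.const_mul ?_ _
  have := integrable_exp_neg_mul_sq (by norm_num : (0:ℝ) < 1/2)
  convert this using 2 with x
  ring_nf

lemma hasDerivAt_PhiCdf (t : ℝ) : HasDerivAt PhiCdf (gauss t) t := by
  have key : ∀ u : ℝ, PhiCdf u = PhiCdf 0 + ∫ x in (0:ℝ)..u, gauss x := by
    intro u
    have := intervalIntegral.integral_Iic_sub_Iic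
      (gauss_integrable.integrableOn (s := Iic (0:ℝ))) (gauss_integrable.integrableOn (s := Iic u))
    unfold PhiCdf
    linarith [this]
  have h : HasDerivAt (fun u => PhiCdf 0 + ∫ x in (0:ℝ)..u, gauss x) (gauss t) t := by
    apply HasDerivAt.const_add
    exact intervalIntegral.integral_hasDerivAt_right
      (gauss_integrable.intervalIntegrable) gauss_cont.aestronglyMeasurable.stronglyMeasurableAtFilter
      gauss_cont.continuousAt
  exact h.congr_of_eventuallyEq (Eventually.of_forall fun u => (key u))

lemma PhiCdf_nonneg (t : ℝ) : 0 ≤ PhiCdf t :=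
  setIntegral_nonneg measurableSet_Iic fun x _ => (gauss_pos x).le

lemma PhiCdf_le (t : ℝ) : PhiCdf t ≤ 1 := by
  have h1 : PhiCdf t ≤ ∫ x, gauss x :=
    setIntegral_le_integral gauss_integrable (Eventually.of_forall fun x => (gauss_pos x).le)
  have h2 : (∫ x, gauss x) = 1 := by
    unfold gauss
    rw [integral_const_mul]
    have : (∫ x : ℝ, Real.exp (-x ^ 2 / 2)) = Real.sqrt (2 * Real.pi) := by
      have := integral_gaussian (1/2 : ℝ)
      rw [show Real.pi / (1/2) = 2 * Real.pi by ring] at this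
      rw [← this]
      congr 1 with x
      ring_nf
    rw [this, inv_mul_cancel₀ (by positivity)]
  linarith

lemma phi2_factor {ρ : ℝ} (h : 0 < 1 - ρ ^ 2) (x y : ℝ) :
    phi2 x y ρ = gauss x *
      ((Real.sqrt (1 - ρ ^ 2))⁻¹ * gauss ((y - ρ * x) / Real.sqrt (1 - ρ ^ 2))) := by
  have hs : 0 < Real.sqrt (1 - ρ ^ 2) := Real.sqrt_pos.2 h
  have hs2 : Real.sqrt (1 - ρ ^ 2) ^ 2 = 1 - ρ ^ 2 := Real.sq_sqrt h.le
  have h2pi : Real.sqrt (2 * Real.pi) ^ 2 = 2 * Real.pi := Real.sq_sqrt (by positivity)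
  unfold phi2 gauss
  have key : (2 * Real.pi * Real.sqrt (1 - ρ ^ 2))⁻¹
      = (Real.sqrt (2 * Real.pi))⁻¹ * ((Real.sqrt (1 - ρ ^ 2))⁻¹ * (Real.sqrt (2 * Real.pi))⁻¹) := by
    rw [← mul_inv, ← mul_inv]
    congr 1
    nlinarith [h2pi]
  have hsq : ((y - ρ * x) / Real.sqrt (1 - ρ ^ 2)) ^ 2 = (y - ρ * x) ^ 2 / (1 - ρ ^ 2) := by
    rw [div_pow, hs2]
  have kexp : Real.exp (-(x ^ 2 - 2 * ρ * x * y + y ^ 2) / (2 * (1 - ρ ^ 2)))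
      = Real.exp (-x ^ 2 / 2) * Real.exp (-((y - ρ * x) / Real.sqrt (1 - ρ ^ 2)) ^ 2 / 2) := by
    rw [← Real.exp_add]
    congr 1
    rw [hsq]
    field_simp
    ring
  rw [key, kexp]
  ring

lemma inner_integral {ρ : ℝ} (h : 0 < 1 - ρ ^ 2) (b x : ℝ) :
    ∫ y in Set.Iic b, phi2 x y ρ
      = gauss x * PhiCdf ((b - ρ * x) / Real.sqrt (1 - ρ ^ 2)) := by
  have hs : 0 < Real.sqrt (1 - ρ ^ 2) := Real.sqrt_pos.2 h
  set s := Real.sqrt (1 - ρ ^ 2) with hs_def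
  set c := (b - ρ * x) / s with hc_def
  simp_rw [phi2_factor h, hc_def, ← hs_def]
  rw [integral_const_mul, integral_const_mul]
  congr 1
  have key : (∫ y in Set.Iic b, gauss ((y - ρ * x) / s)) = s * PhiCdf c := by
    have hind : ∀ y : ℝ, (Set.Iic b).indicator (fun y => gauss ((y - ρ * x) / s)) y
        = ((Set.Iic c).indicator gauss) ((y - ρ * x) / s) := by
      intro y
      by_cases hy : y ∈ Set.Iic b
      · rw [Set.indicator_of_mem hy, Set.indicator_of_mem]
        show (y - ρ * x) / s ≤ c
        rw [hc_def]
        gcongr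
        exact hy
      · rw [Set.indicator_of_notMem hy, Set.indicator_of_notMem]
        intro hmem
        apply hy
        have := (div_le_div_iff_of_pos_right hs).1 hmem
        simpa using this
    rw [← integral_indicator measurableSet_Iic]
    calc (∫ y, (Set.Iic b).indicator (fun y => gauss ((y - ρ * x) / s)) y)
        = ∫ y, ((Set.Iic c).indicator gauss) ((y - ρ * x) / s) := by
          exact integral_congr_ae (Eventually.of_forall hind)
      _ = ∫ y, ((Set.Iic c).indicator gauss) (y / s) := by
          exact integral_sub_right_eq_self (fun y => ((Set.Iic c).indicator gauss) (y / s)) (ρ * x)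
      _ = |s| • ∫ y, ((Set.Iic c).indicator gauss) y := Measure.integral_comp_div _ s
      _ = s * PhiCdf c := by
          rw [integral_indicator measurableSet_Iic, abs_of_pos hs, smul_eq_mul]; rfl
  rw [key, ← mul_assoc, inv_mul_cancel₀ hs.ne', one_mul]

lemma hasDerivAt_u {ρ x b : ℝ} (h : 0 < 1 - ρ ^ 2) :
    HasDerivAt (fun r => (b - r * x) / Real.sqrt (1 - r ^ 2))
      ((ρ * b - x) / (Real.sqrt (1 - ρ ^ 2)) ^ 3) ρ := by
  have hs : 0 < Real.sqrt (1 - ρ ^ 2) := Real.sqrt_pos.2 h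
  have hs2 : Real.sqrt (1 - ρ ^ 2) ^ 2 = 1 - ρ ^ 2 := Real.sq_sqrt h.le
  have hD : HasDerivAt (fun r : ℝ => Real.sqrt (1 - r ^ 2)) (-ρ / Real.sqrt (1 - ρ ^ 2)) ρ := by
    have h1 : HasDerivAt (fun r : ℝ => 1 - r ^ 2) (-(2 * ρ)) ρ := by
      simpa using (hasDerivAt_pow 2 ρ).const_sub 1
    have h2 := (Real.hasDerivAt_sqrt h.ne').comp ρ h1
    refine h2.congr_deriv ?_
    field_simp
  have hN : HasDerivAt (fun r : ℝ => b - r * x) (-x) ρ := by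
    simpa using ((hasDerivAt_id ρ).mul_const x).const_sub b
  have h3 := hN.div hD hs.ne'
  refine h3.congr_deriv ?_
  field_simp
  ring_nf
  rw [hs2]
  ring

lemma hasDerivAt_phi2_fst {ρ b : ℝ} (h : 0 < 1 - ρ ^ 2) (x : ℝ) :
    HasDerivAt (fun t => phi2 t b ρ) (phi2 x b ρ * ((ρ * b - x) / (1 - ρ ^ 2))) x := by
  have hfun : (fun t => phi2 t b ρ) = fun t =>
      (2 * Real.pi * Real.sqrt (1 - ρ ^ 2))⁻¹ *
        Real.exp ((-1 / (2 * (1 - ρ ^ 2))) * (t ^ 2 - 2 * ρ * t * b + b ^ 2)) := by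
    funext t
    unfold phi2
    congr 1
    ring_nf
  have h1a : HasDerivAt (fun t : ℝ => t ^ 2) (2 * x) x := by
    simpa using hasDerivAt_pow 2 x
  have h1b : HasDerivAt (fun t : ℝ => 2 * ρ * t * b) (2 * ρ * b) x := by
    simpa using ((hasDerivAt_id x).const_mul (2 * ρ)).mul_const b
  have h1 := (h1a.sub h1b).add_const (b ^ 2)
  have hQ := h1.const_mul (-1 / (2 * (1 - ρ ^ 2)))
  have h2 := (hQ.exp).const_mul ((2 * Real.pi * Real.sqrt (1 - ρ ^ 2))⁻¹)
  rw [hfun]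
  refine h2.congr_deriv ?_
  unfold phi2
  simp only [Pi.sub_apply]
  rw [show -(x ^ 2 - 2 * ρ * x * b + b ^ 2) / (2 * (1 - ρ ^ 2))
      = (-1 / (2 * (1 - ρ ^ 2))) * (x ^ 2 - 2 * ρ * x * b + b ^ 2) by ring]
  field_simp
  ring

lemma gauss_tendsto_atBot : Tendsto gauss atBot (nhds 0) := by
  have h2 : Tendsto (fun x : ℝ => x ^ 2) atBot atTop := by
    have ha : Tendsto (fun x : ℝ => |x| ^ 2) atBot atTop :=
      (tendsto_pow_atTop (n := 2) (by norm_num)).comp tendsto_abs_atBot_atTop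
    refine ha.congr fun x => sq_abs x
  have h3 : Tendsto (fun x : ℝ => -x ^ 2) atBot atBot := tendsto_neg_atTop_atBot.comp h2
  have h1 : Tendsto (fun x : ℝ => -x ^ 2 / 2) atBot atBot := h3.atBot_div_const (by norm_num)
  have h5 : Tendsto (fun x : ℝ => Real.exp (-x ^ 2 / 2)) atBot (nhds 0) :=
    Real.tendsto_exp_atBot.comp h1
  have h4 := h5.const_mul ((Real.sqrt (2 * Real.pi))⁻¹)
  unfold gauss
  simpa using h4

lemma tendsto_phi2_fst_atBot {ρ : ℝ} (h : 0 < 1 - ρ ^ 2) (b : ℝ) :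
    Tendsto (fun x => phi2 x b ρ) atBot (nhds 0) := by
  have hs : 0 < Real.sqrt (1 - ρ ^ 2) := Real.sqrt_pos.2 h
  have h0 : ∀ x, 0 ≤ phi2 x b ρ := by
    intro x
    rw [phi2_factor h]
    exact mul_nonneg (gauss_pos x).le (mul_nonneg (inv_nonneg.2 hs.le) (gauss_pos _).le)
  have hb : ∀ x, phi2 x b ρ ≤ gauss x * ((Real.sqrt (1 - ρ ^ 2))⁻¹ * (Real.sqrt (2 * Real.pi))⁻¹) := by
    intro x
    rw [phi2_factor h]
    exact mul_le_mul_of_nonneg_left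
      (mul_le_mul_of_nonneg_left (gauss_le _) (inv_nonneg.2 hs.le)) (gauss_pos x).le
  have htg : Tendsto (fun x => gauss x * ((Real.sqrt (1 - ρ ^ 2))⁻¹ * (Real.sqrt (2 * Real.pi))⁻¹))
      atBot (nhds 0) := by
    simpa using gauss_tendsto_atBot.mul_const ((Real.sqrt (1 - ρ ^ 2))⁻¹ * (Real.sqrt (2 * Real.pi))⁻¹)
  exact squeeze_zero h0 hb htg

lemma integrable_bound (c1 c2 : ℝ) : Integrable (fun x : ℝ => gauss x * (c1 + c2 * |x|)) := by
  have h1 : Integrable (fun x : ℝ => gauss x * c1) := gauss_integrable.mul_const c1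
  have h2 : Integrable (fun x : ℝ => gauss x * (c2 * |x|)) := by
    have h3 : Integrable (fun x : ℝ => x * Real.exp (-(1/2) * x ^ 2)) :=
      integrable_mul_exp_neg_mul_sq (by norm_num)
    have h4 := (h3.abs).const_mul ((Real.sqrt (2 * Real.pi))⁻¹ * c2)
    apply h4.congr
    filter_upwards with x
    rw [abs_mul, abs_of_pos (Real.exp_pos _)]
    unfold gauss
    rw [show -(1/2 : ℝ) * x ^ 2 = -x ^ 2 / 2 by ring]
    ring
  refine (h1.add h2).congr ?_
  filter_upwards with x
  simp [mul_add]

/-- Bivariate standard normal cdf with correlation ρ. -/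
noncomputable def Phi2 (a b ρ : ℝ) : ℝ :=
  ∫ x in Set.Iic a, ∫ y in Set.Iic b, phi2 x y ρ


lemma PhiCdf_continuous : Continuous PhiCdf := by
  have h : Differentiable ℝ PhiCdf := fun t => (hasDerivAt_PhiCdf t).differentiableAt
  exact h.continuous

set_option maxHeartbeats 1000000 in
lemma hasDerivAt_Phi2 (a b : ℝ) {ρ₀ : ℝ} (hρ : ρ₀ ∈ Set.Ioo (-1 : ℝ) 1) :
    HasDerivAt (fun ρ => Phi2 a b ρ) (phi2 a b ρ₀) ρ₀ := by
  obtain ⟨hl, hr⟩ := hρ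
  have habs : |ρ₀| < 1 := abs_lt.2 ⟨hl, hr⟩
  set m : ℝ := (1 + |ρ₀|) / 2 with hm_def
  have hm1 : m < 1 := by rw [hm_def]; linarith
  have hm0 : |ρ₀| < m := by rw [hm_def]; linarith
  have hmpos : 0 ≤ m := by positivity
  set ε : ℝ := m - |ρ₀| with hε_def
  have hε : 0 < ε := sub_pos.2 hm0
  set δ : ℝ := 1 - m ^ 2 with hδ_def
  have hδ : 0 < δ := by rw [hδ_def]; nlinarith
  have hδ1 : δ ≤ 1 := by rw [hδ_def]; nlinarith
  have hρ0sq : 0 < 1 - ρ₀ ^ 2 := by nlinarith [sq_abs ρ₀, abs_nonneg ρ₀]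
  have hs0 : 0 < Real.sqrt (1 - ρ₀ ^ 2) := Real.sqrt_pos.2 hρ0sq
  have hs0sq : Real.sqrt (1 - ρ₀ ^ 2) ^ 2 = 1 - ρ₀ ^ 2 := Real.sq_sqrt hρ0sq.le
  set sδ : ℝ := Real.sqrt δ with hsδ_def
  have hsδ : 0 < sδ := Real.sqrt_pos.2 hδ
  have hball : ∀ ρ ∈ Metric.ball ρ₀ ε, δ ≤ 1 - ρ ^ 2 ∧ 0 < 1 - ρ ^ 2 ∧ |ρ| ≤ 1 := by
    intro ρ hρm
    rw [Metric.mem_ball, Real.dist_eq] at hρm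
    have h1 : |ρ| < m := by
      have := abs_sub_abs_le_abs_sub ρ ρ₀
      rw [hε_def] at hρm
      linarith
    have h2 : ρ ^ 2 ≤ m ^ 2 := by nlinarith [sq_abs ρ, abs_nonneg ρ]
    exact ⟨by rw [hδ_def]; linarith, by nlinarith, by nlinarith [abs_nonneg ρ]⟩
  set F : ℝ → ℝ → ℝ := fun r x => gauss x * PhiCdf ((b - r * x) / Real.sqrt (1 - r ^ 2))
    with hF_def
  set F' : ℝ → ℝ → ℝ := fun r x => gauss x *
    (gauss ((b - r * x) / Real.sqrt (1 - r ^ 2)) * ((r * b - x) / (Real.sqrt (1 - r ^ 2)) ^ 3))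
    with hF'_def
  set c2 : ℝ := (Real.sqrt (2 * Real.pi))⁻¹ / sδ ^ 3 with hc2_def
  have hc2 : 0 ≤ c2 := by positivity
  set c1 : ℝ := c2 * |b| with hc1_def
  set bound : ℝ → ℝ := fun x => gauss x * (c1 + c2 * |x|) with hbound_def
  have hFc : ∀ r : ℝ, Continuous (F r) := by
    intro r
    apply gauss_cont.mul
    exact PhiCdf_continuous.comp (by fun_prop)
  have hF'c : Continuous (F' ρ₀) := by
    apply gauss_cont.mul
    apply Continuous.mul (gauss_cont.comp (by fun_prop))
    fun_prop
  have main := hasDerivAt_integral_of_dominated_loc_of_deriv_le (μ := volume.restrict (Iic a))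
    (F := F) (F' := F') (bound := bound) (x₀ := ρ₀) (Metric.ball_mem_nhds ρ₀ hε)
    (Eventually.of_forall fun r => (hFc r).aestronglyMeasurable.restrict)
    ?hint hF'c.aestronglyMeasurable.restrict ?hbd ?bint ?hdiff
  case hint =>
    apply Integrable.mono' (gauss_integrable.restrict (s := Iic a))
      ((hFc ρ₀).aestronglyMeasurable.restrict)
    filter_upwards with x
    rw [hF_def]
    simp only [norm_mul, Real.norm_eq_abs, abs_of_pos (gauss_pos x),
      abs_of_nonneg (PhiCdf_nonneg _)]
    nlinarith [gauss_pos x, PhiCdf_le ((b - ρ₀ * x) / Real.sqrt (1 - ρ₀ ^ 2)),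
      PhiCdf_nonneg ((b - ρ₀ * x) / Real.sqrt (1 - ρ₀ ^ 2))]
  case hbd =>
    filter_upwards with x
    intro r hrb
    obtain ⟨hδle, hpos, habs1⟩ := hball r hrb
    have hsr : 0 < Real.sqrt (1 - r ^ 2) := Real.sqrt_pos.2 hpos
    have hsrδ : sδ ≤ Real.sqrt (1 - r ^ 2) := Real.sqrt_le_sqrt hδle
    rw [hF'_def]
    simp only [norm_mul, Real.norm_eq_abs, abs_of_pos (gauss_pos x), abs_of_pos (gauss_pos _),
      abs_div, abs_of_pos (pow_pos hsr 3)]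
    rw [hbound_def, hc1_def]
    have hnum : |r * b - x| ≤ |b| + |x| := by
      calc |r * b - x| ≤ |r * b| + |x| := abs_sub _ _
        _ ≤ |b| + |x| := by
            rw [abs_mul]
            nlinarith [abs_nonneg b, abs_nonneg x, abs_nonneg r]
    have hden : sδ ^ 3 ≤ Real.sqrt (1 - r ^ 2) ^ 3 := by
      exact pow_le_pow_left₀ hsδ.le hsrδ 3
    have hfrac : |r * b - x| / Real.sqrt (1 - r ^ 2) ^ 3 ≤ (|b| + |x|) / sδ ^ 3 :=
      div_le_div₀ (by positivity) hnum (by positivity) hden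
    have hg2 : gauss ((b - r * x) / Real.sqrt (1 - r ^ 2)) ≤ (Real.sqrt (2 * Real.pi))⁻¹ :=
      gauss_le _
    have key : gauss ((b - r * x) / Real.sqrt (1 - r ^ 2)) *
        (|r * b - x| / Real.sqrt (1 - r ^ 2) ^ 3)
        ≤ c2 * |b| + c2 * |x| := by
      rw [hc2_def]
      calc gauss ((b - r * x) / Real.sqrt (1 - r ^ 2)) *
            (|r * b - x| / Real.sqrt (1 - r ^ 2) ^ 3)
          ≤ (Real.sqrt (2 * Real.pi))⁻¹ * ((|b| + |x|) / sδ ^ 3) := by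
            apply mul_le_mul hg2 hfrac (by positivity) (by positivity)
        _ = (Real.sqrt (2 * Real.pi))⁻¹ / sδ ^ 3 * |b| +
            (Real.sqrt (2 * Real.pi))⁻¹ / sδ ^ 3 * |x| := by ring
    exact mul_le_mul_of_nonneg_left key (gauss_pos x).le
  case bint => exact (integrable_bound c1 c2).restrict
  case hdiff =>
    filter_upwards with x
    intro r hrb
    obtain ⟨hδle, hpos, habs1⟩ := hball r hrb
    exact ((hasDerivAt_PhiCdf _).comp r (hasDerivAt_u hpos)).const_mul (gauss x)
  obtain ⟨hF'int, hderiv⟩ := main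
  -- identify the derivative value
  have heqF' : ∀ x : ℝ, F' ρ₀ x = phi2 x b ρ₀ * ((ρ₀ * b - x) / (1 - ρ₀ ^ 2)) := by
    intro x
    show gauss x * (gauss ((b - ρ₀ * x) / Real.sqrt (1 - ρ₀ ^ 2)) *
      ((ρ₀ * b - x) / (Real.sqrt (1 - ρ₀ ^ 2)) ^ 3)) = _
    rw [phi2_factor hρ0sq]
    rw [show (Real.sqrt (1 - ρ₀ ^ 2)) ^ 3 = Real.sqrt (1 - ρ₀ ^ 2) * (1 - ρ₀ ^ 2) by
      linear_combination Real.sqrt (1 - ρ₀ ^ 2) * hs0sq]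
    generalize gauss x = G
    generalize gauss ((b - ρ₀ * x) / Real.sqrt (1 - ρ₀ ^ 2)) = U
    rw [div_mul_eq_div_div]
    ring
  have hval : (∫ x in Iic a, F' ρ₀ x) = phi2 a b ρ₀ := by
    have hcongr : (∫ x in Iic a, F' ρ₀ x)
        = ∫ x in Iic a, phi2 x b ρ₀ * ((ρ₀ * b - x) / (1 - ρ₀ ^ 2)) := by
      exact integral_congr_ae (Eventually.of_forall fun x => heqF' x)
    rw [hcongr]
    have := integral_Iic_of_hasDerivAt_of_tendsto (a := a)
      (f := fun x => phi2 x b ρ₀)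
      (f' := fun x => phi2 x b ρ₀ * ((ρ₀ * b - x) / (1 - ρ₀ ^ 2)))
      (m := 0)
      ((hasDerivAt_phi2_fst hρ0sq a).continuousAt.continuousWithinAt)
      (fun x _ => hasDerivAt_phi2_fst hρ0sq x)
      (hF'int.congr (Eventually.of_forall fun x => heqF' x))
      (tendsto_phi2_fst_atBot hρ0sq b)
    rw [this, sub_zero]
  rw [← hval]
  -- identify the function near ρ₀
  apply hderiv.congr_of_eventuallyEq
  filter_upwards [Ioo_mem_nhds hl hr] with r hrIoo
  have hpos : 0 < 1 - r ^ 2 := by nlinarith [hrIoo.1, hrIoo.2]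
  unfold Phi2
  exact integral_congr_ae (Eventually.of_forall fun x => inner_integral hpos b x)

/-- For fixed `a, b`, the map `ρ ↦ Φ₂(a,b;ρ)` is continuous and strictly
increasing on `(−1, 1)`. -/
theorem Phi2_continuousOn_strictMonoOn (a b : ℝ) :
    ContinuousOn (fun ρ => Phi2 a b ρ) (Set.Ioo (-1 : ℝ) 1) ∧
    StrictMonoOn (fun ρ => Phi2 a b ρ) (Set.Ioo (-1 : ℝ) 1) := by
  have hcont : ContinuousOn (fun ρ => Phi2 a b ρ) (Set.Ioo (-1 : ℝ) 1) := fun ρ hρ =>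
    ((hasDerivAt_Phi2 a b hρ).continuousAt).continuousWithinAt
  refine ⟨hcont, ?_⟩
  apply strictMonoOn_of_deriv_pos (convex_Ioo _ _) hcont
  intro ρ hρ
  rw [interior_Ioo] at hρ
  rw [(hasDerivAt_Phi2 a b hρ).deriv]
  have h : 0 < 1 - ρ ^ 2 := by nlinarith [hρ.1, hρ.2]
  unfold phi2
  exact mul_pos (inv_pos.2 (mul_pos (by positivity) (Real.sqrt_pos.2 h))) (Real.exp_pos _)
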